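/- Let C be a category with finite coproducts, X an object, and u : X ⟶ X an idempotent. Then condition (3) implies condition (2) for all morphisms f : T_r ⟶ T_s and all r, s if and only if u = 𝟙_X; that is, (∀ r s (f : T_r ⟶ T_s), u_r ≫ f = f ≫ u_s → (u_r ≫ f = f ∧ f ≫ u_s = f)) ↔ u = 𝟙_X. -/

import Mathlib

open CategoryTheory CategoryTheory.Limits

universe u v

variable {C : Type u} [Category.{v} C]

/-- `T X n` is the coproduct of `n` copies of `X`, indexed by `Fin n`. -/
noncomputable def T [HasFiniteCoproducts C] (X : C) (n : ℕ) : C :=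
  ∐ (fun _ : Fin n => X)

/-- `uN u n : T_n ⟶ T_n` is the `n`-fold coproduct of the endomorphism `u : X ⟶ X`. -/
noncomputable def uN [HasFiniteCoproducts C] {X : C} (u : X ⟶ X) (n : ℕ) :
    T X n ⟶ T X n :=
  Limits.Sigma.map (fun _ : Fin n => u)

/-- For an idempotent `u : X ⟶ X`, condition (3) `u_r ≫ f = f ≫ u_s` implies
condition (2) `u_r ≫ f = f` and `f ≫ u_s = f` for all morphisms `f : T_r ⟶ T_s`
if and only if `u = 𝟙 X`. -/
theorem idempotent_condition_three_implies_two_iff_id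
    [HasFiniteCoproducts C] (X : C) (u : X ⟶ X) (hu : u ≫ u = u) :
    (∀ (r s : ℕ) (f : T X r ⟶ T X s),
        uN u r ≫ f = f ≫ uN u s → (uN u r ≫ f = f ∧ f ≫ uN u s = f)) ↔
      u = 𝟙 X := by
  constructor
  · intro h
    have h1 := (h 1 1 (𝟙 _) (by simp)).1
    rw [Category.comp_id] at h1
    have h2 : Sigma.ι (fun _ : Fin 1 => X) 0 ≫ uN u 1 = u ≫ Sigma.ι (fun _ : Fin 1 => X) 0 := by
      exact Sigma.ι_map (fun _ : Fin 1 => u) 0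
    rw [h1] at h2; erw [Category.comp_id] at h2
    have h3 : Sigma.ι (fun _ : Fin 1 => X) 0 ≫ Sigma.desc (fun _ => 𝟙 X) = 𝟙 X := by simp
    calc u = u ≫ Sigma.ι (fun _ : Fin 1 => X) 0 ≫ Sigma.desc (fun _ => 𝟙 X) := by
            rw [h3, Category.comp_id]
      _ = Sigma.ι (fun _ : Fin 1 => X) 0 ≫ Sigma.desc (fun _ => 𝟙 X) := by
            rw [← Category.assoc, ← h2]
      _ = 𝟙 X := h3
  · intro h r s f _
    have hid : ∀ n, uN u n = 𝟙 (T X n) := by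
      intro n
      apply Sigma.hom_ext
      intro b
      simp [uN, h, T]
    simp [hid]
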